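/- Let σ(n) = 1/n and μ̃(n) = 1 for n ≤ N, μ̃(n) = n^{-2} for n > N, and let τ̃ be the nonincreasing rearrangement of the tensor product sequence σ̃_2(n_1, n_2) = σ(n_1)·μ̃(n_2). Then liminf_{n→∞} τ̃(n)·n ≥ N. -/

import Mathlib

open Filter Real Set


private lemma inv_nat_le {a b : ℕ} (ha : 0 < a) (hb : 0 < b) (h : ((a:ℝ))⁻¹ ≤ ((b:ℝ))⁻¹) : b ≤ a := by
  have := (inv_le_inv₀ (by exact_mod_cast ha) (by exact_mod_cast hb)).mp h
  exact_mod_cast this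

private lemma inv_nat_le' {a b : ℕ} (ha : 0 < a) (hb : 0 < b) (h : b ≤ a) : ((a:ℝ))⁻¹ ≤ ((b:ℝ))⁻¹ :=
  inv_anti₀ (by exact_mod_cast hb) (by exact_mod_cast h)

private lemma key_lower (N : ℕ) (hN : 1 ≤ N) (f : ℕ+ × ℕ+ → ℝ)
    (hf : ∀ p : ℕ+ × ℕ+, f p =
      if (p.2 : ℕ) ≤ N then ((p.1 : ℕ) : ℝ)⁻¹
      else ((p.1 : ℕ) : ℝ)⁻¹ * (((p.2 : ℕ) : ℝ) ^ 2)⁻¹)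
    (τ : ℕ+ → ℝ) (hτa : Antitone τ)
    (hre : ∀ t : ℝ, 0 < t →
      {n : ℕ+ | t ≤ τ n}.ncard = {p : ℕ+ × ℕ+ | t ≤ f p}.ncard)
    (k : ℕ+) : (((k:ℕ):ℝ))⁻¹ ≤ τ ⟨(k:ℕ)*N, Nat.mul_pos k.pos hN⟩ := by
  set t : ℝ := (((k:ℕ):ℝ))⁻¹ with hT
  have ht : 0 < t := by positivity
  set e : ℕ+ × ℕ+ → ℕ × ℕ := fun p => ((p.1:ℕ),(p.2:ℕ)) with he_def
  have he : Function.Injective e := by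
    intro p q h
    simp only [he_def, Prod.mk.injEq] at h
    exact Prod.ext (PNat.coe_injective h.1) (PNat.coe_injective h.2)
  set B : Set (ℕ+ × ℕ+) := {p | t ≤ f p} with hB_def
  -- bounds on members of B
  have hBbd : ∀ p ∈ B, (p.1:ℕ) ≤ (k:ℕ) ∧ (p.2:ℕ) ≤ max N (k:ℕ) := by
    intro p hp
    have hp' : t ≤ f p := hp
    rw [hf p] at hp'
    by_cases hc : (p.2:ℕ) ≤ N
    · rw [if_pos hc] at hp'
      exact ⟨inv_nat_le k.pos p.1.pos hp', le_max_of_le_left hc⟩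
    · rw [if_neg hc] at hp'
      have h2 : (1:ℝ) ≤ ((p.2:ℕ):ℝ) := by exact_mod_cast p.2.one_le
      have h1 : (1:ℝ) ≤ ((p.1:ℕ):ℝ) := by exact_mod_cast p.1.one_le
      constructor
      · apply inv_nat_le k.pos p.1.pos
        refine hp'.trans ?_
        calc ((p.1:ℕ):ℝ)⁻¹ * (((p.2:ℕ):ℝ)^2)⁻¹ ≤ ((p.1:ℕ):ℝ)⁻¹ * 1 := by
              apply mul_le_mul_of_nonneg_left _ (by positivity)
              rw [inv_le_one_iff₀]; right; nlinarith
          _ = ((p.1:ℕ):ℝ)⁻¹ := mul_one _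
      · refine le_max_of_le_right (inv_nat_le k.pos p.2.pos (hp'.trans ?_))
        calc ((p.1:ℕ):ℝ)⁻¹ * (((p.2:ℕ):ℝ)^2)⁻¹ ≤ 1 * (((p.2:ℕ):ℝ)^2)⁻¹ := by
              apply mul_le_mul_of_nonneg_right _ (by positivity)
              rw [inv_le_one_iff₀]; right; exact h1
          _ = (((p.2:ℕ):ℝ)^2)⁻¹ := one_mul _
          _ ≤ ((p.2:ℕ):ℝ)⁻¹ := by
              apply inv_anti₀ (by positivity); nlinarith
  have hBfin : B.Finite := by
    apply Set.Finite.of_finite_image _ he.injOn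
    apply Set.Finite.subset (Finset.Icc 1 (k:ℕ) ×ˢ Finset.Icc 1 (max N (k:ℕ)) : Finset (ℕ×ℕ)).finite_toSet
    rintro q ⟨p, hp, rfl⟩
    obtain ⟨h1, h2⟩ := hBbd p hp
    simp only [he_def, Finset.coe_product, Set.mem_prod, Finset.mem_coe, Finset.mem_Icc]
    exact ⟨⟨p.1.one_le, h1⟩, ⟨p.2.one_le, h2⟩⟩
  have hsub : ↑(Finset.Icc 1 (k:ℕ) ×ˢ Finset.Icc 1 N : Finset (ℕ×ℕ)) ⊆ e '' B := by
    rintro ⟨a, b⟩ hq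
    simp only [Finset.coe_product, Set.mem_prod, Finset.mem_coe, Finset.mem_Icc] at hq
    refine ⟨(⟨a, hq.1.1⟩, ⟨b, hq.2.1⟩), ?_, rfl⟩
    show t ≤ f _
    rw [hf]
    simp only []
    rw [if_pos (by exact hq.2.2)]
    exact inv_nat_le' k.pos hq.1.1 hq.1.2
  have hcard : (k:ℕ) * N ≤ B.ncard := by
    calc (k:ℕ) * N = (Finset.Icc 1 (k:ℕ) ×ˢ Finset.Icc 1 N : Finset (ℕ×ℕ)).card := by
          simp [Finset.card_product]
      _ = (↑(Finset.Icc 1 (k:ℕ) ×ˢ Finset.Icc 1 N : Finset (ℕ×ℕ)) : Set (ℕ×ℕ)).ncard := by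
          rw [Set.ncard_coe_finset]
      _ ≤ (e '' B).ncard := Set.ncard_le_ncard hsub (hBfin.image e)
      _ = B.ncard := Set.ncard_image_of_injective _ he
  set T : Set ℕ+ := {n | t ≤ τ n} with hT_def
  have hTB : T.ncard = B.ncard := hre t ht
  have hkN' : 0 < (k:ℕ) * N := Nat.mul_pos k.pos hN
  have hkN : 1 ≤ (k:ℕ) * N := hkN'
  have hTfin : T.Finite := by
    by_contra h
    rw [Set.Infinite.ncard h] at hTB
    omega
  -- show the target element is in T
  by_contra hmem
  have hTsub : T ⊆ {n : ℕ+ | (n:ℕ) < (k:ℕ)*N} := by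
    intro n hn
    simp only [Set.mem_setOf_eq]
    by_contra hlt
    push_neg at hlt
    have hle : (⟨(k:ℕ)*N, hkN'⟩ : ℕ+) ≤ n := hlt
    exact hmem (le_trans hn (hτa hle))
  have : T.ncard ≤ (k:ℕ)*N - 1 := by
    have h1 : (PNat.val : ℕ+ → ℕ) '' T ⊆ ↑(Finset.Icc 1 ((k:ℕ)*N - 1)) := by
      rintro x ⟨n, hn, rfl⟩
      have := hTsub hn
      simp only [Set.mem_setOf_eq] at this
      simp only [Finset.coe_Icc, Set.mem_Icc]
      exact ⟨n.one_le, by omega⟩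
    calc T.ncard = ((PNat.val : ℕ+ → ℕ) '' T).ncard :=
          (Set.ncard_image_of_injective _ PNat.coe_injective).symm
      _ ≤ (↑(Finset.Icc 1 ((k:ℕ)*N - 1)) : Set ℕ).ncard :=
          Set.ncard_le_ncard h1 (Finset.finite_toSet _)
      _ = (k:ℕ)*N - 1 := by rw [Set.ncard_coe_finset]; simp
  omega

-- telescoping sum bound : ∑_{i<m} (m/(i+2)^2 : ℕ) ≤ m   (as reals, then ℕ)
private lemma sum_bound (m : ℕ) : ∑ i ∈ Finset.range m, (m / (i+2)^2 : ℕ) ≤ m := by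
  have hreal : (↑(∑ i ∈ Finset.range m, (m / (i+2)^2 : ℕ)) : ℝ) ≤ (m:ℝ) := by
    push_cast
    set c : ℝ := (m:ℝ) with hc
    have hc0 : 0 ≤ c := by positivity
    set F : ℕ → ℝ := fun i => -(c / (i+1)) with hF
    have hterm : ∀ i ∈ Finset.range m, ((m / (i+2)^2 : ℕ) : ℝ) ≤ F (i+1) - F i := by
      intro i _
      have h1 : ((m / (i+2)^2 : ℕ) : ℝ) ≤ c / ((i+2)^2 : ℕ) := Nat.cast_div_le
      refine h1.trans ?_
      have h2 : (0:ℝ) < (i:ℝ)+1 := by positivity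
      have h3 : (0:ℝ) < (i:ℝ)+2 := by positivity
      have hF' : F (i+1) - F i = c / ((i:ℝ)+1) - c / ((i:ℝ)+2) := by
        simp only [hF]
        push_cast
        ring
      rw [hF']
      rw [div_sub_div _ _ (ne_of_gt h2) (ne_of_gt h3)]
      have h4 : c * ((i:ℝ)+2) - ((i:ℝ)+1) * c = c := by ring
      rw [h4]
      push_cast
      apply div_le_div_of_nonneg_left hc0 (by positivity)
      nlinarith
    calc ∑ i ∈ Finset.range m, ((m / (i+2)^2 : ℕ) : ℝ)
        ≤ ∑ i ∈ Finset.range m, (F (i+1) - F i) := Finset.sum_le_sum hterm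
      _ = F m - F 0 := Finset.sum_range_sub F m
      _ = c - c / (m+1) := by simp [hF]; ring
      _ ≤ c := by
          have : 0 ≤ c / ((m:ℝ)+1) := by positivity
          linarith
  exact_mod_cast hreal

private lemma key_upper (N : ℕ) (hN : 1 ≤ N) (f : ℕ+ × ℕ+ → ℝ)
    (hf : ∀ p : ℕ+ × ℕ+, f p =
      if (p.2 : ℕ) ≤ N then ((p.1 : ℕ) : ℝ)⁻¹
      else ((p.1 : ℕ) : ℝ)⁻¹ * (((p.2 : ℕ) : ℝ) ^ 2)⁻¹)
    (τ : ℕ+ → ℝ) (hτa : Antitone τ)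
    (hre : ∀ t : ℝ, 0 < t →
      {n : ℕ+ | t ≤ τ n}.ncard = {p : ℕ+ × ℕ+ | t ≤ f p}.ncard)
    (m : ℕ) (hm : 1 ≤ m) :
    τ ⟨m*(N+1)+1, Nat.succ_pos _⟩ < ((m:ℝ))⁻¹ := by
  set t : ℝ := ((m:ℝ))⁻¹ with ht_def
  have ht : 0 < t := by positivity
  set e : ℕ+ × ℕ+ → ℕ × ℕ := fun p => ((p.1:ℕ),(p.2:ℕ)) with he_def
  have he : Function.Injective e := by
    intro p q h
    simp only [he_def, Prod.mk.injEq] at h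
    exact Prod.ext (PNat.coe_injective h.1) (PNat.coe_injective h.2)
  set B : Set (ℕ+ × ℕ+) := {p | t ≤ f p} with hB_def
  set F1 : Finset (ℕ×ℕ) := Finset.Icc 1 m ×ˢ Finset.Icc 1 N with hF1
  set F2 : Finset (ℕ×ℕ) := (Finset.range m).biUnion
      (fun i => (Finset.Icc 1 (m / (i+2)^2)).image (fun a => (a, i+2))) with hF2
  have hBsub : e '' B ⊆ ↑(F1 ∪ F2) := by
    rintro q ⟨p, hp, rfl⟩
    have hp' : t ≤ f p := hp
    rw [hf p] at hp'
    rw [Finset.coe_union, Set.mem_union]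
    by_cases hc : (p.2:ℕ) ≤ N
    · left
      rw [if_pos hc] at hp'
      have h1 : (p.1:ℕ) ≤ m := inv_nat_le hm p.1.pos hp'
      simp only [hF1, he_def, Finset.coe_product, Set.mem_prod, Finset.mem_coe, Finset.mem_Icc]
      exact ⟨⟨p.1.one_le, h1⟩, ⟨p.2.one_le, hc⟩⟩
    · right
      rw [if_neg hc] at hp'
      push_neg at hc
      set a : ℕ := (p.1:ℕ)
      set b : ℕ := (p.2:ℕ)
      have hb2 : 2 ≤ b := by omega
      have habm : a * b^2 ≤ m := by
        apply inv_nat_le hm (by positivity)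
        refine hp'.trans_eq ?_
        push_cast
        rw [mul_inv]
      have ha1 : 1 ≤ a := p.1.one_le
      have hbm : b ≤ m := by
        refine le_trans ?_ habm
        calc b ≤ b^2 := by nlinarith
          _ ≤ a * b^2 := by nlinarith
      have ha : a ≤ m / b^2 := (Nat.le_div_iff_mul_le (by positivity)).mpr habm
      simp only [hF2, he_def, Finset.mem_coe, Finset.mem_biUnion, Finset.mem_image,
        Finset.mem_range, Finset.mem_Icc]
      refine ⟨b - 2, by omega, a, ⟨p.1.one_le, by rw [show b - 2 + 2 = b by omega]; exact ha⟩, ?_⟩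
      simp only [Prod.mk.injEq]
      exact ⟨rfl, by omega⟩
  have hBfin : B.Finite := by
    apply Set.Finite.of_finite_image _ he.injOn
    exact Set.Finite.subset (F1 ∪ F2).finite_toSet hBsub
  have hBcard : B.ncard ≤ m * (N+1) := by
    calc B.ncard = (e '' B).ncard := (Set.ncard_image_of_injective _ he).symm
      _ ≤ (↑(F1 ∪ F2) : Set (ℕ×ℕ)).ncard := Set.ncard_le_ncard hBsub (Finset.finite_toSet _)
      _ = (F1 ∪ F2).card := Set.ncard_coe_finset _
      _ ≤ F1.card + F2.card := Finset.card_union_le _ _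
      _ ≤ m * N + ∑ i ∈ Finset.range m, (m / (i+2)^2 : ℕ) := by
          gcongr
          · simp [hF1]
          · exact Finset.card_biUnion_le.trans
              (Finset.sum_le_sum fun i _ => Finset.card_image_le.trans (by simp))
      _ ≤ m * N + m := by have := sum_bound m; omega
      _ = m * (N+1) := by ring
  set T : Set ℕ+ := {n | t ≤ τ n} with hT_def
  have hTB : T.ncard = B.ncard := hre t ht
  by_contra hcon
  push_neg at hcon
  -- hcon : t ≤ τ n₀ ; then Iic n₀ ⊆ T
  set n₀ : ℕ+ := ⟨m*(N+1)+1, Nat.succ_pos _⟩ with hn₀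
  have hsubT : ↑(Finset.Icc 1 (m*(N+1)+1)) ⊆ (PNat.val : ℕ+ → ℕ) '' T := by
    intro j hj
    simp only [Finset.coe_Icc, Set.mem_Icc] at hj
    refine ⟨⟨j, hj.1⟩, ?_, rfl⟩
    have hle : (⟨j, hj.1⟩ : ℕ+) ≤ n₀ := by
      have : j ≤ m*(N+1)+1 := hj.2
      exact this
    exact le_trans hcon (hτa hle)
  have hTfin : T.Finite := by
    by_contra h
    rw [Set.Infinite.ncard h] at hTB
    -- B nonempty : (1,1) ∈ B
    have hBne : B.Nonempty := by
      refine ⟨(1,1), ?_⟩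
      show t ≤ f (1,1)
      rw [hf]
      simp only [PNat.one_coe, hN, if_pos]
      simp only [Nat.cast_one, inv_one]
      rw [ht_def]
      apply inv_le_one_of_one_le₀
      exact_mod_cast hm
    have := (Set.ncard_pos hBfin).mpr hBne
    omega
  have : m*(N+1)+1 ≤ T.ncard := by
    calc m*(N+1)+1 = (Finset.Icc 1 (m*(N+1)+1)).card := by simp
      _ = (↑(Finset.Icc 1 (m*(N+1)+1)) : Set ℕ).ncard := (Set.ncard_coe_finset _).symm
      _ ≤ ((PNat.val : ℕ+ → ℕ) '' T).ncard := Set.ncard_le_ncard hsubT (hTfin.image _)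
      _ = T.ncard := Set.ncard_image_of_injective _ PNat.coe_injective
  omega

private lemma pnat_tendsto : Tendsto (fun n : ℕ+ => ((n:ℕ):ℝ)) atTop atTop := by
  apply Filter.tendsto_atTop.2
  intro b
  obtain ⟨m, hm⟩ := exists_nat_ge b
  filter_upwards [Filter.eventually_ge_atTop (⟨m+1, Nat.succ_pos m⟩ : ℕ+)] with n hn
  have hn' : (m+1 : ℕ) ≤ (n:ℕ) := hn
  calc b ≤ (m:ℝ) := hm
    _ ≤ ((n:ℕ):ℝ) := by exact_mod_cast le_trans (Nat.le_succ m) hn'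


theorem stmt_13 (N : ℕ) (hN : 1 ≤ N) (f : ℕ+ × ℕ+ → ℝ)
    (hf : ∀ p : ℕ+ × ℕ+, f p =
      if (p.2 : ℕ) ≤ N then ((p.1 : ℕ) : ℝ)⁻¹
      else ((p.1 : ℕ) : ℝ)⁻¹ * (((p.2 : ℕ) : ℝ) ^ 2)⁻¹)
    (τ : ℕ+ → ℝ) (hτa : Antitone τ)
    -- τ is the nonincreasing rearrangement of f
    (hre : ∀ t : ℝ, 0 < t →
      {n : ℕ+ | t ≤ τ n}.ncard = {p : ℕ+ × ℕ+ | t ≤ f p}.ncard) :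
    (N : ℝ) ≤ Filter.liminf (fun n : ℕ+ => τ n * ((n : ℕ) : ℝ)) Filter.atTop := by
  have hNpos : 0 < N := hN
  set v : ℕ+ → ℝ := fun n => τ n * ((n:ℕ):ℝ) with hv
  set g : ℕ+ → ℝ := fun n => (N:ℝ) - (N:ℝ)^2 / (((n:ℕ):ℝ) + N) with hg
  have h1 : ∀ n : ℕ+, g n ≤ v n := by
    intro n
    set k : ℕ := (n:ℕ)/N + 1 with hk
    have hkpos : 0 < k := Nat.succ_pos _
    have hq1 : N * ((n:ℕ)/N) + (n:ℕ) % N = (n:ℕ) := Nat.div_add_mod _ _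
    have hq2 : (n:ℕ) % N < N := Nat.mod_lt _ hNpos
    have hq3 : (n:ℕ)/N*N = N*((n:ℕ)/N) := mul_comm _ _
    have hkN : k * N = (n:ℕ)/N*N + N := by ring
    have hnk : (n:ℕ) ≤ k * N := by omega
    have hkn : k * N ≤ (n:ℕ) + N := by
      have h5 := Nat.div_mul_le_self (n:ℕ) N
      omega
    have hτk := key_lower N hN f hf τ hτa hre ⟨k, hkpos⟩
    have hτn : ((k:ℕ):ℝ)⁻¹ ≤ τ n := by
      refine le_trans hτk (hτa ?_)
      exact hnk
    have hvn : ((n:ℕ):ℝ) / (k:ℝ) ≤ v n := by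
      rw [div_eq_mul_inv, mul_comm]
      exact mul_le_mul_of_nonneg_right hτn (by positivity)
    refine le_trans ?_ hvn
    have hKM : (k:ℝ) * (N:ℝ) ≤ ((n:ℕ):ℝ) + (N:ℝ) := by exact_mod_cast hkn
    have hx0 : (0:ℝ) < ((n:ℕ):ℝ) := by exact_mod_cast n.pos
    have hM1 : (1:ℝ) ≤ (N:ℝ) := by exact_mod_cast hN
    have hK0 : (0:ℝ) < (k:ℝ) := by exact_mod_cast hkpos
    have hxM : (0:ℝ) < ((n:ℕ):ℝ) + (N:ℝ) := by linarith
    show (N:ℝ) - (N:ℝ)^2 / (((n:ℕ):ℝ) + (N:ℝ)) ≤ ((n:ℕ):ℝ) / (k:ℝ)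
    have heq : (N:ℝ) - (N:ℝ)^2/(((n:ℕ):ℝ)+(N:ℝ)) = (N:ℝ)*((n:ℕ):ℝ)/(((n:ℕ):ℝ)+(N:ℝ)) := by
      field_simp
      ring
    rw [heq, div_le_div_iff₀ hxM hK0]
    nlinarith [mul_le_mul_of_nonneg_left hKM (le_of_lt hx0)]
  have htop : Tendsto (fun n : ℕ+ => ((n:ℕ):ℝ) + N) atTop atTop :=
    tendsto_atTop_add_const_right _ _ pnat_tendsto
  have h0 : Tendsto (fun n : ℕ+ => (N:ℝ)^2 / (((n:ℕ):ℝ)+N)) atTop (nhds 0) :=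
    Filter.Tendsto.div_atTop tendsto_const_nhds htop
  have hg_t : Tendsto g atTop (nhds N) := by
    have h7 := (tendsto_const_nhds : Tendsto (fun _ : ℕ+ => (N:ℝ)) atTop (nhds (N:ℝ))).sub h0
    simpa using h7
  have hcob : IsCoboundedUnder (· ≥ ·) (atTop : Filter ℕ+) v := by
    apply Filter.IsCoboundedUnder.of_frequently_le (a := (N:ℝ)+2)
    rw [Filter.frequently_atTop]
    intro n₀
    set m : ℕ := (n₀:ℕ) with hm_def
    have hm1 : 1 ≤ m := n₀.one_le
    refine ⟨⟨m*(N+1)+1, Nat.succ_pos _⟩, ?_, ?_⟩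
    · show (n₀:ℕ) ≤ m*(N+1)+1
      have : m ≤ m*(N+1) := Nat.le_mul_of_pos_right _ (Nat.succ_pos _)
      omega
    · have hkU := key_upper N hN f hf τ hτa hre m hm1
      have hτ' : τ ⟨m*(N+1)+1, Nat.succ_pos _⟩ ≤ (m:ℝ)⁻¹ := le_of_lt hkU
      have h6 : v ⟨m*(N+1)+1, Nat.succ_pos _⟩ ≤ (m:ℝ)⁻¹ * ((m*(N+1)+1 : ℕ):ℝ) :=
        mul_le_mul_of_nonneg_right hτ' (Nat.cast_nonneg _)
      refine le_trans h6 ?_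
      have hm0 : (0:ℝ) < (m:ℝ) := by exact_mod_cast hm1
      rw [inv_mul_le_iff₀ hm0]
      push_cast
      nlinarith [(by exact_mod_cast hm1 : (1:ℝ) ≤ (m:ℝ))]
  calc (N:ℝ) = Filter.liminf g atTop := (hg_t.liminf_eq).symm
    _ ≤ Filter.liminf v atTop :=
        Filter.liminf_le_liminf (Filter.Eventually.of_forall h1) hg_t.isBoundedUnder_ge hcob
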